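/- Let f = a₀ + a₁x + ⋯ + aₙxⁿ ∈ ℤ[x] be a primitive polynomial such that each complex zero θ of f satisfies |θ| > d, where the leading coefficient aₙ = ±pᵏ·d for positive integers k, d and a prime p not dividing d. Suppose j ∈ {1,…,n} satisfies gcd(k,j) = 1, pᵏ divides gcd(a_{n−j+1}, …, aₙ), and, in case k > 1, p does not divide a_{n−j}. If moreover |a₀/q| ≤ |aₙ|, where q is the smallest prime divisor of a₀, then f is irreducible in ℤ[x]. -/

import Mathlib

open Polynomial

namespace Stmt2Aux

noncomputable def v (p : ℕ) (c : ℤ) : ℕ∞ := if c = 0 then ⊤ else (padicValInt p c : ℕ∞)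

variable {p : ℕ} [hp : Fact p.Prime]

lemma v_le_iff {t : ℕ} {c : ℤ} : (t : ℕ∞) ≤ v p c ↔ (p : ℤ) ^ t ∣ c := by
  unfold v
  split
  · simp_all
  · rename_i h
    rw [padicValInt_dvd_iff]
    simp [h, Nat.cast_le]

lemma v_lt_iff {t : ℕ} {c : ℤ} : (t : ℕ∞) < v p c ↔ (p : ℤ) ^ (t + 1) ∣ c := by
  rw [← v_le_iff]
  constructor
  · intro h; exact_mod_cast Order.add_one_le_of_lt h
  · intro h; exact lt_of_lt_of_le (by exact_mod_cast lt_add_one t) h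

lemma v_eq_coe {t : ℕ} {c : ℤ} (hc : c ≠ 0) (ht : padicValInt p c = t) : v p c = t := by
  unfold v; simp [hc, ht]

lemma v_mul (a b : ℤ) : v p (a * b) = v p a + v p b := by
  rcases eq_or_ne a 0 with rfl | ha
  · simp [v]
  rcases eq_or_ne b 0 with rfl | hb
  · simp [v]
  unfold v
  simp [ha, hb, mul_ne_zero ha hb, padicValInt.mul ha hb]

lemma v_sum {ι : Type*} {s : Finset ι} {F : ι → ℤ} {t : ℕ}
    (h : ∀ x ∈ s, (t : ℕ∞) ≤ v p (F x)) : (t : ℕ∞) ≤ v p (∑ x ∈ s, F x) := by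
  rw [v_le_iff]
  exact Finset.dvd_sum fun x hx => v_le_iff.mp (h x hx)

lemma v_dom {ι : Type*} [DecidableEq ι] {s : Finset ι} {F : ι → ℤ} {x₀ : ι} (hx₀ : x₀ ∈ s) {t : ℕ}
    (h0 : v p (F x₀) = t) (h : ∀ x ∈ s, x ≠ x₀ → (t : ℕ∞) < v p (F x)) :
    v p (∑ x ∈ s, F x) = t := by
  have hsplit : ∑ x ∈ s, F x = F x₀ + ∑ x ∈ s.erase x₀, F x := (Finset.add_sum_erase s F hx₀).symm
  have hrest : (p : ℤ) ^ (t + 1) ∣ ∑ x ∈ s.erase x₀, F x := by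
    rw [← v_le_iff] at *
    push_cast
    apply v_sum (t := t + 1)
    intro x hx
    have := h x (Finset.mem_of_mem_erase hx) (Finset.ne_of_mem_erase hx)
    exact_mod_cast Order.add_one_le_of_lt this
  have hd0 : (p : ℤ) ^ t ∣ F x₀ := v_le_iff.mp h0.ge
  have hd1 : ¬ (p : ℤ) ^ (t + 1) ∣ F x₀ := by
    intro hcon
    have := v_lt_iff.mpr hcon
    rw [h0] at this
    exact lt_irrefl _ this
  have h1 : (t : ℕ∞) ≤ v p (∑ x ∈ s, F x) := by
    rw [hsplit, v_le_iff]
    exact dvd_add hd0 (dvd_trans (pow_dvd_pow _ (by omega)) hrest)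
  have h2 : ¬ (t : ℕ∞) < v p (∑ x ∈ s, F x) := by
    rw [v_lt_iff, hsplit]
    intro hcon
    have hcon' : (p : ℤ) ^ (t + 1) ∣ (∑ x ∈ s.erase x₀, F x) + F x₀ := by
      rw [add_comm (∑ x ∈ s.erase x₀, F x)]
      simpa [add_comm 1 t] using hcon
    exact hd1 ((dvd_add_right hrest).mp hcon')
  exact le_antisymm (not_lt.mp h2) h1

noncomputable def W (p j k : ℕ) (P : Polynomial ℤ) (i : ℕ) : ℕ∞ :=
  (j : ℕ∞) * v p (P.coeff i) + ((k * i : ℕ) : ℕ∞)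

omit hp in
lemma W_eq_top {j k : ℕ} (hj : 0 < j) {P : Polynomial ℤ} {i : ℕ} (h : P.coeff i = 0) :
    W p j k P i = ⊤ := by
  unfold W v
  rw [if_pos h, ENat.mul_top (by exact_mod_cast hj.ne')]
  simp

omit hp in
lemma W_coe {j k : ℕ} {P : Polynomial ℤ} {i : ℕ} (h : P.coeff i ≠ 0) :
    W p j k P i = ((j * padicValInt p (P.coeff i) + k * i : ℕ) : ℕ∞) := by
  unfold W v
  rw [if_neg h]
  push_cast
  rfl

omit hp in
lemma W_eq_coe_iff {j k : ℕ} (hj : 0 < j) {P : Polynomial ℤ} {i t : ℕ} :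
    W p j k P i = (t : ℕ∞) ↔ P.coeff i ≠ 0 ∧ j * padicValInt p (P.coeff i) + k * i = t := by
  rcases eq_or_ne (P.coeff i) 0 with h | h
  · rw [W_eq_top hj h]
    simp [h]
  · rw [W_coe h]
    rw [Nat.cast_inj]
    simp [h]

omit hp in
lemma le_W_iff {j k : ℕ} (hj : 0 < j) {P : Polynomial ℤ} {i t : ℕ} :
    (t : ℕ∞) ≤ W p j k P i ↔ P.coeff i = 0 ∨ t ≤ j * padicValInt p (P.coeff i) + k * i := by
  rcases eq_or_ne (P.coeff i) 0 with h | h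
  · rw [W_eq_top hj h]; simp [h]
  · rw [W_coe h, Nat.cast_le]; simp [h]

omit hp in
lemma lt_W_iff {j k : ℕ} (hj : 0 < j) {P : Polynomial ℤ} {i t : ℕ} :
    (t : ℕ∞) < W p j k P i ↔ P.coeff i = 0 ∨ t < j * padicValInt p (P.coeff i) + k * i := by
  rcases eq_or_ne (P.coeff i) 0 with h | h
  · rw [W_eq_top hj h]; simp [h, lt_top_iff_ne_top]
  · rw [W_coe h, Nat.cast_lt]; simp [h]

omit hp in
lemma attain {j k : ℕ} (hj : 0 < j) (P : Polynomial ℤ) (hP0 : P.coeff 0 ≠ 0) :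
    ∃ δ u u' : ℕ, (∀ i, (δ : ℕ∞) ≤ W p j k P i) ∧ W p j k P u = (δ : ℕ∞) ∧
      W p j k P u' = (δ : ℕ∞) ∧ (∀ i, W p j k P i = (δ : ℕ∞) → u ≤ i ∧ i ≤ u') ∧
      δ ≤ j * padicValInt p (P.coeff 0) := by
  classical
  set S : Set ℕ := {t : ℕ | ∃ i, W p j k P i = (t : ℕ∞)} with hS
  have hW0 : W p j k P 0 = ((j * padicValInt p (P.coeff 0) : ℕ) : ℕ∞) := by
    rw [W_coe hP0]; norm_num
  have hSne : S.Nonempty := ⟨j * padicValInt p (P.coeff 0), 0, hW0⟩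
  set δ := sInf S with hδ
  obtain ⟨i₀, hi₀⟩ := Nat.sInf_mem hSne
  have hmin : ∀ i, (δ : ℕ∞) ≤ W p j k P i := by
    intro i
    rcases eq_or_ne (P.coeff i) 0 with h | h
    · rw [W_eq_top hj h]; exact le_top
    · rw [W_coe h, Nat.cast_le]
      exact Nat.sInf_le ⟨i, W_coe h⟩
  have hbound : δ ≤ j * padicValInt p (P.coeff 0) := Nat.sInf_le ⟨0, hW0⟩
  have hcne : ∀ {i}, W p j k P i = (δ : ℕ∞) → i ≤ P.natDegree := by
    intro i hi
    by_contra hcon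
    have : P.coeff i = 0 := Polynomial.coeff_eq_zero_of_natDegree_lt (by omega)
    rw [W_eq_top hj this] at hi
    exact (WithTop.coe_ne_top (a := δ)) hi.symm
  set T : Set ℕ := {i : ℕ | W p j k P i = (δ : ℕ∞)} with hT
  have hTne : T.Nonempty := ⟨i₀, hi₀⟩
  set u := sInf T with hu
  have hu1 : W p j k P u = (δ : ℕ∞) := Nat.sInf_mem hTne
  set A : Finset ℕ := (Finset.range (P.natDegree + 1)).filter
    (fun i => W p j k P i = (δ : ℕ∞)) with hA
  have hAne : A.Nonempty := ⟨i₀, Finset.mem_filter.mpr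
    ⟨Finset.mem_range.mpr (by have := hcne hi₀; omega), hi₀⟩⟩
  refine ⟨δ, u, A.max' hAne, hmin, hu1, ?_, ?_, hbound⟩
  · exact (Finset.mem_filter.mp (A.max'_mem hAne)).2
  · intro i hi
    refine ⟨Nat.sInf_le hi, A.le_max' i (Finset.mem_filter.mpr
      ⟨Finset.mem_range.mpr (by have := hcne hi; omega), hi⟩)⟩

lemma conv {G H : Polynomial ℤ} {a₀ b₀ tG tH : ℕ}
    (hG : v p (G.coeff a₀) = (tG : ℕ∞)) (hH : v p (H.coeff b₀) = (tH : ℕ∞))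
    (huniq : ∀ a b, a + b = a₀ + b₀ → ¬(a = a₀ ∧ b = b₀) →
      ((tG + tH : ℕ) : ℕ∞) < v p (G.coeff a) + v p (H.coeff b)) :
    v p ((G * H).coeff (a₀ + b₀)) = ((tG + tH : ℕ) : ℕ∞) := by
  rw [Polynomial.coeff_mul]
  apply v_dom (x₀ := (a₀, b₀)) (Finset.HasAntidiagonal.mem_antidiagonal.mpr rfl)
  · rw [v_mul, hG, hH]
    push_cast
    rfl
  · intro x hx hne
    rw [v_mul]
    exact huniq x.1 x.2 (Finset.HasAntidiagonal.mem_antidiagonal.mp hx)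
      (fun h => hne (Prod.ext h.1 h.2))

omit hp in
lemma v_eq_coe_iff {t : ℕ} {c : ℤ} : v p c = (t : ℕ∞) ↔ c ≠ 0 ∧ padicValInt p c = t := by
  unfold v
  split
  · simp_all
  · rename_i h
    rw [Nat.cast_inj]
    simp [h]

lemma cancel1 {j k tG tH vG vH uG uH a b : ℕ}
    (h1 : j * tG + k * uG < j * vG + k * a) (h2 : j * tH + k * uH ≤ j * vH + k * b)
    (hsum : a + b = uG + uH) : tG + tH < vG + vH := by
  have hc : j * (tG + tH) + k * (uG + uH) < j * (vG + vH) + k * (a + b) := by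
    calc j * (tG + tH) + k * (uG + uH) = (j * tG + k * uG) + (j * tH + k * uH) := by ring
    _ < (j * vG + k * a) + (j * vH + k * b) := add_lt_add_of_lt_of_le h1 h2
    _ = j * (vG + vH) + k * (a + b) := by ring
  rw [hsum] at hc
  have := Nat.add_lt_add_iff_right.mp hc
  exact Nat.lt_of_mul_lt_mul_left this

lemma cancel2 {j k α β vG vH a b : ℕ}
    (h1 : j * α < j * vG + k * a) (h2 : j * β ≤ j * vH + k * b)
    (hsum : a + b = j) (hk : α + β = k) : 1 ≤ vG + vH := by
  by_contra hcon
  push_neg at hcon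
  have hvG : vG = 0 := by omega
  have hvH : vH = 0 := by omega
  rw [hvG, Nat.mul_zero, Nat.zero_add] at h1
  rw [hvH, Nat.mul_zero, Nat.zero_add] at h2
  have : j * α + j * β < k * a + k * b := add_lt_add_of_lt_of_le h1 h2
  rw [← Nat.mul_add, ← Nat.mul_add, hk, hsum, Nat.mul_comm] at this
  exact lt_irrefl _ this

lemma key {k j : ℕ} (hj : 0 < j) (hgcd : Nat.gcd k j = 1)
    {G H : Polynomial ℤ} (hG0 : G.coeff 0 ≠ 0) (hH0 : H.coeff 0 ≠ 0)
    (hpG : (p : ℤ) ∣ G.coeff 0) (hpH : (p : ℤ) ∣ H.coeff 0)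
    (hF0 : (p : ℤ) ^ k ∣ (G * H).coeff 0)
    (hFk : ¬ (p : ℤ) ^ (k + 1) ∣ (G * H).coeff 0)
    (hFmid : ∀ i, 1 ≤ i → i < j → (p : ℤ) ^ k ∣ (G * H).coeff i)
    (hFj : ¬ (p : ℤ) ∣ (G * H).coeff j) : False := by
  classical
  set α := padicValInt p (G.coeff 0) with hαdef
  set β := padicValInt p (H.coeff 0) with hβdef
  have hvG0 : v p (G.coeff 0) = (α : ℕ∞) := v_eq_coe_iff.mpr ⟨hG0, rfl⟩
  have hvH0 : v p (H.coeff 0) = (β : ℕ∞) := v_eq_coe_iff.mpr ⟨hH0, rfl⟩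
  have hα : 1 ≤ α := by
    have h1 : ((1 : ℕ) : ℕ∞) ≤ v p (G.coeff 0) := v_le_iff.mpr (by simpa using hpG)
    rw [hvG0, Nat.cast_le] at h1
    exact h1
  have hβ : 1 ≤ β := by
    have h1 : ((1 : ℕ) : ℕ∞) ≤ v p (H.coeff 0) := v_le_iff.mpr (by simpa using hpH)
    rw [hvH0, Nat.cast_le] at h1
    exact h1
  have hF0coeff : (G * H).coeff 0 = G.coeff 0 * H.coeff 0 := Polynomial.mul_coeff_zero _ _
  have hvF0 : v p ((G * H).coeff 0) = ((α + β : ℕ) : ℕ∞) := by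
    rw [hF0coeff, v_mul, hvG0, hvH0]
    push_cast
    rfl
  have habk : α + β = k := by
    have h2 : ((k : ℕ) : ℕ∞) ≤ v p ((G * H).coeff 0) := v_le_iff.mpr hF0
    have h3 : ¬ ((k + 1 : ℕ) : ℕ∞) ≤ v p ((G * H).coeff 0) := fun hc => hFk (v_le_iff.mp hc)
    rw [hvF0, Nat.cast_le] at h2
    rw [hvF0, Nat.cast_le] at h3
    omega
  have hk2 : 2 ≤ k := by omega
  obtain ⟨δG, uG, uG', hGmin, hGu, hGu', hGuu, hGb⟩ := attain (p := p) (k := k) hj G hG0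
  obtain ⟨δH, uH, uH', hHmin, hHu, hHu', hHuu, hHb⟩ := attain (p := p) (k := k) hj H hH0
  -- lower bound for weights of F
  have hFlb : ∀ c, ((j * k : ℕ) : ℕ∞) ≤ W p j k (G * H) c := by
    intro c
    rcases eq_or_ne ((G * H).coeff c) 0 with h | h
    · rw [W_eq_top hj h]; exact le_top
    rw [W_coe h, Nat.cast_le]
    rcases Nat.eq_zero_or_pos c with rfl | hc1
    · have hkle : k ≤ padicValInt p ((G * H).coeff 0) := by
        rcases (padicValInt_dvd_iff k _).mp hF0 with h' | h'
        · exact absurd h' h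
        · exact h'
      calc j * k ≤ j * padicValInt p ((G * H).coeff 0) := Nat.mul_le_mul_left _ hkle
      _ ≤ _ := Nat.le_add_right _ _
    rcases Nat.lt_or_ge c j with hcj | hcj
    · have hkle : k ≤ padicValInt p ((G * H).coeff c) := by
        rcases (padicValInt_dvd_iff k _).mp (hFmid c hc1 hcj) with h' | h'
        · exact absurd h' h
        · exact h'
      calc j * k ≤ j * padicValInt p ((G * H).coeff c) := Nat.mul_le_mul_left _ hkle
      _ ≤ _ := Nat.le_add_right _ _
    · calc j * k = k * j := Nat.mul_comm _ _
      _ ≤ k * c := Nat.mul_le_mul_left _ hcj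
      _ ≤ _ := Nat.le_add_left _ _
  -- characterization of equality
  have hFeq : ∀ c, W p j k (G * H) c = ((j * k : ℕ) : ℕ∞) → c = 0 ∨ c = j := by
    intro c hc
    obtain ⟨hne, heq⟩ := (W_eq_coe_iff hj).mp hc
    by_contra hcon
    push_neg at hcon
    obtain ⟨hc0, hcj⟩ := hcon
    rcases Nat.lt_or_ge c j with hlt | hge
    · have hc1 : 1 ≤ c := by omega
      have hkle : k ≤ padicValInt p ((G * H).coeff c) := by
        rcases (padicValInt_dvd_iff k _).mp (hFmid c hc1 hlt) with h' | h'
        · exact absurd h' hne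
        · exact h'
      have : j * k + k * c ≤ j * padicValInt p ((G * H).coeff c) + k * c :=
        Nat.add_le_add_right (Nat.mul_le_mul_left _ hkle) _
      rw [heq] at this
      have hkc : 0 < k * c := Nat.mul_pos (by omega) hc1
      omega
    · have hgt : j < c := by omega
      have : k * j < k * c := Nat.mul_lt_mul_of_le_of_lt (le_refl k) hgt (by omega)
      have h2 : j * k < j * padicValInt p ((G * H).coeff c) + k * c := by
        calc j * k = k * j := Nat.mul_comm _ _
        _ < k * c := this
        _ ≤ _ := Nat.le_add_left _ _
      omega
  -- data at attainment points
  obtain ⟨hGune, hGueq⟩ := (W_eq_coe_iff hj).mp hGu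
  obtain ⟨hHune, hHueq⟩ := (W_eq_coe_iff hj).mp hHu
  obtain ⟨hGu'ne, hGu'eq⟩ := (W_eq_coe_iff hj).mp hGu'
  obtain ⟨hHu'ne, hHu'eq⟩ := (W_eq_coe_iff hj).mp hHu'
  set tG := padicValInt p (G.coeff uG) with htGdef
  set tH := padicValInt p (H.coeff uH) with htHdef
  set tG' := padicValInt p (G.coeff uG') with htG'def
  set tH' := padicValInt p (H.coeff uH') with htH'def
  have hvGu : v p (G.coeff uG) = (tG : ℕ∞) := v_eq_coe_iff.mpr ⟨hGune, rfl⟩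
  have hvHu : v p (H.coeff uH) = (tH : ℕ∞) := v_eq_coe_iff.mpr ⟨hHune, rfl⟩
  have hvGu' : v p (G.coeff uG') = (tG' : ℕ∞) := v_eq_coe_iff.mpr ⟨hGu'ne, rfl⟩
  have hvHu' : v p (H.coeff uH') = (tH' : ℕ∞) := v_eq_coe_iff.mpr ⟨hHu'ne, rfl⟩
  -- min-side uniqueness
  have hmin_lt : ∀ a b, a + b = uG + uH → ¬(a = uG ∧ b = uH) →
      ((tG + tH : ℕ) : ℕ∞) < v p (G.coeff a) + v p (H.coeff b) := by
    intro a b hab hne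
    rcases eq_or_ne (G.coeff a) 0 with h | h
    · have hv : v p (G.coeff a) = ⊤ := by unfold v; simp [h]
      rw [hv, top_add]
      exact WithTop.coe_lt_top _
    rcases eq_or_ne (H.coeff b) 0 with h' | h'
    · have hv : v p (H.coeff b) = ⊤ := by unfold v; simp [h']
      rw [hv, add_top]
      exact WithTop.coe_lt_top _
    have hva : v p (G.coeff a) = (padicValInt p (G.coeff a) : ℕ∞) := v_eq_coe_iff.mpr ⟨h, rfl⟩
    have hvb : v p (H.coeff b) = (padicValInt p (H.coeff b) : ℕ∞) := v_eq_coe_iff.mpr ⟨h', rfl⟩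
    rw [hva, hvb, ← Nat.cast_add, Nat.cast_lt]
    have hWa : δG ≤ j * padicValInt p (G.coeff a) + k * a := by
      have := hGmin a
      rwa [W_coe h, Nat.cast_le] at this
    have hWb : δH ≤ j * padicValInt p (H.coeff b) + k * b := by
      have := hHmin b
      rwa [W_coe h', Nat.cast_le] at this
    rcases Nat.lt_trichotomy a uG with hlt | heq | hgt
    · have hne2 : j * padicValInt p (G.coeff a) + k * a ≠ δG := by
        intro hcon
        have := (hGuu a ((W_eq_coe_iff hj).mpr ⟨h, hcon⟩)).1
        omega
      have h1 : j * tG + k * uG < j * padicValInt p (G.coeff a) + k * a := by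
        rw [hGueq]
        exact lt_of_le_of_ne hWa (Ne.symm hne2)
      exact cancel1 h1 (by rw [hHueq]; exact hWb) hab
    · exact absurd ⟨heq, by omega⟩ hne
    · have hblt : b < uH := by omega
      have hne2 : j * padicValInt p (H.coeff b) + k * b ≠ δH := by
        intro hcon
        have := (hHuu b ((W_eq_coe_iff hj).mpr ⟨h', hcon⟩)).1
        omega
      have h1 : j * tH + k * uH < j * padicValInt p (H.coeff b) + k * b := by
        rw [hHueq]
        exact lt_of_le_of_ne hWb (Ne.symm hne2)
      have h2 : j * tG + k * uG ≤ j * padicValInt p (G.coeff a) + k * a := by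
        rw [hGueq]
        exact hWa
      have hsum : b + a = uH + uG := by omega
      have := cancel1 h1 h2 hsum
      omega
  -- max-side uniqueness
  have hmax_lt : ∀ a b, a + b = uG' + uH' → ¬(a = uG' ∧ b = uH') →
      ((tG' + tH' : ℕ) : ℕ∞) < v p (G.coeff a) + v p (H.coeff b) := by
    intro a b hab hne
    rcases eq_or_ne (G.coeff a) 0 with h | h
    · have hv : v p (G.coeff a) = ⊤ := by unfold v; simp [h]
      rw [hv, top_add]
      exact WithTop.coe_lt_top _
    rcases eq_or_ne (H.coeff b) 0 with h' | h'
    · have hv : v p (H.coeff b) = ⊤ := by unfold v; simp [h']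
      rw [hv, add_top]
      exact WithTop.coe_lt_top _
    have hva : v p (G.coeff a) = (padicValInt p (G.coeff a) : ℕ∞) := v_eq_coe_iff.mpr ⟨h, rfl⟩
    have hvb : v p (H.coeff b) = (padicValInt p (H.coeff b) : ℕ∞) := v_eq_coe_iff.mpr ⟨h', rfl⟩
    rw [hva, hvb, ← Nat.cast_add, Nat.cast_lt]
    have hWa : δG ≤ j * padicValInt p (G.coeff a) + k * a := by
      have := hGmin a
      rwa [W_coe h, Nat.cast_le] at this
    have hWb : δH ≤ j * padicValInt p (H.coeff b) + k * b := by
      have := hHmin b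
      rwa [W_coe h', Nat.cast_le] at this
    rcases Nat.lt_trichotomy a uG' with hlt | heq | hgt
    · have hblt : uH' < b := by omega
      have hne2 : j * padicValInt p (H.coeff b) + k * b ≠ δH := by
        intro hcon
        have := (hHuu b ((W_eq_coe_iff hj).mpr ⟨h', hcon⟩)).2
        omega
      have h1 : j * tH' + k * uH' < j * padicValInt p (H.coeff b) + k * b := by
        rw [hHu'eq]
        exact lt_of_le_of_ne hWb (Ne.symm hne2)
      have h2 : j * tG' + k * uG' ≤ j * padicValInt p (G.coeff a) + k * a := by
        rw [hGu'eq]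
        exact hWa
      have hsum : b + a = uH' + uG' := by omega
      have := cancel1 h1 h2 hsum
      omega
    · exact absurd ⟨heq, by omega⟩ hne
    · have hne2 : j * padicValInt p (G.coeff a) + k * a ≠ δG := by
        intro hcon
        have := (hGuu a ((W_eq_coe_iff hj).mpr ⟨h, hcon⟩)).2
        omega
      have h1 : j * tG' + k * uG' < j * padicValInt p (G.coeff a) + k * a := by
        rw [hGu'eq]
        exact lt_of_le_of_ne hWa (Ne.symm hne2)
      exact cancel1 h1 (by rw [hHu'eq]; exact hWb) hab
  -- conclusion of min side
  have hconvmin := conv hvGu hvHu hmin_lt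
  have hFminne : (G * H).coeff (uG + uH) ≠ 0 := (v_eq_coe_iff.mp hconvmin).1
  have hWFmin : W p j k (G * H) (uG + uH) = ((δG + δH : ℕ) : ℕ∞) := by
    rw [W_coe hFminne, (v_eq_coe_iff.mp hconvmin).2]
    congr 1
    rw [← hGueq, ← hHueq]
    ring
  have h1 : j * k ≤ δG + δH := by
    have := hFlb (uG + uH)
    rwa [hWFmin, Nat.cast_le] at this
  have hjk : j * α + j * β = j * k := by rw [← Nat.mul_add, habk]
  have hδG : δG = j * α := by
    refine le_antisymm hGb ?_
    have h2 : j * α + j * β ≤ δG + j * β :=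
      le_trans (le_of_eq hjk) (le_trans h1 (Nat.add_le_add_left hHb _))
    omega
  have hδH : δH = j * β := by
    refine le_antisymm hHb ?_
    have h2 : j * α + j * β ≤ j * α + δH := by
      calc j * α + j * β = j * k := hjk
      _ ≤ δG + δH := h1
      _ ≤ j * α + δH := Nat.add_le_add_right hGb _
    omega
  -- conclusion of max side
  have hconvmax := conv hvGu' hvHu' hmax_lt
  have hFmaxne : (G * H).coeff (uG' + uH') ≠ 0 := (v_eq_coe_iff.mp hconvmax).1
  have hWFmax : W p j k (G * H) (uG' + uH') = ((j * k : ℕ) : ℕ∞) := by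
    rw [W_coe hFmaxne, (v_eq_coe_iff.mp hconvmax).2]
    congr 1
    have : j * (tG' + tH') + k * (uG' + uH') = (j * tG' + k * uG') + (j * tH' + k * uH') := by
      ring
    rw [this, hGu'eq, hHu'eq, hδG, hδH]
    omega
  rcases hFeq _ hWFmax with hzero | hjcase
  · -- both maxima are 0 : contradiction with coefficient j
    have huG0 : uG' = 0 := by omega
    have huH0 : uH' = 0 := by omega
    apply hFj
    rw [Polynomial.coeff_mul]
    apply Finset.dvd_sum
    rintro ⟨a, b⟩ hx
    have hab : a + b = j := Finset.HasAntidiagonal.mem_antidiagonal.mp hx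
    simp only
    rcases eq_or_ne (G.coeff a) 0 with h | h
    · rw [h, zero_mul]
      exact dvd_zero _
    rcases eq_or_ne (H.coeff b) 0 with h' | h'
    · rw [h', mul_zero]
      exact dvd_zero _
    have hva : v p (G.coeff a) = (padicValInt p (G.coeff a) : ℕ∞) := v_eq_coe_iff.mpr ⟨h, rfl⟩
    have hvb : v p (H.coeff b) = (padicValInt p (H.coeff b) : ℕ∞) := v_eq_coe_iff.mpr ⟨h', rfl⟩
    have hWa : δG ≤ j * padicValInt p (G.coeff a) + k * a := by
      have := hGmin a
      rwa [W_coe h, Nat.cast_le] at this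
    have hWb : δH ≤ j * padicValInt p (H.coeff b) + k * b := by
      have := hHmin b
      rwa [W_coe h', Nat.cast_le] at this
    have hone : 1 ≤ padicValInt p (G.coeff a) + padicValInt p (H.coeff b) := by
      rcases Nat.eq_zero_or_pos a with ha0 | ha1
      · have hb1 : 1 ≤ b := by omega
        have hne2 : j * padicValInt p (H.coeff b) + k * b ≠ δH := by
          intro hcon
          have := (hHuu b ((W_eq_coe_iff hj).mpr ⟨h', hcon⟩)).2
          omega
        have h1' : j * β < j * padicValInt p (H.coeff b) + k * b := by
          rw [← hδH]
          exact lt_of_le_of_ne hWb (Ne.symm hne2)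
        have h2' : j * α ≤ j * padicValInt p (G.coeff a) + k * a := by
          rw [← hδG]; exact hWa
        have := cancel2 h1' h2' (by omega) (by omega)
        omega
      · have hne2 : j * padicValInt p (G.coeff a) + k * a ≠ δG := by
          intro hcon
          have := (hGuu a ((W_eq_coe_iff hj).mpr ⟨h, hcon⟩)).2
          omega
        have h1' : j * α < j * padicValInt p (G.coeff a) + k * a := by
          rw [← hδG]
          exact lt_of_le_of_ne hWa (Ne.symm hne2)
        have h2' : j * β ≤ j * padicValInt p (H.coeff b) + k * b := by
          rw [← hδH]; exact hWb
        exact cancel2 h1' h2' hab habk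
    have hv1 : ((1 : ℕ) : ℕ∞) ≤ v p (G.coeff a * H.coeff b) := by
      rw [v_mul, hva, hvb, ← Nat.cast_add, Nat.cast_le]
      exact hone
    simpa using v_le_iff.mp hv1
  · -- uG' + uH' = j
    have hdvdG : j ∣ k * uG' := by
      have hjd : j ∣ j * tG' + k * uG' := by
        rw [hGu'eq, hδG]
        exact Dvd.intro _ rfl
      exact (Nat.dvd_add_right (Dvd.intro _ rfl)).mp hjd
    have hcop : Nat.Coprime j k := Nat.Coprime.symm hgcd
    have hjuG : j ∣ uG' := hcop.dvd_of_dvd_mul_left hdvdG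
    rcases Nat.eq_zero_or_pos uG' with h0 | hpos
    · have huH'j : uH' = j := by omega
      have hlt : j * β < k * j := by
        have : j * β < j * k := Nat.mul_lt_mul_of_le_of_lt (le_refl j) (by omega) hj
        rwa [Nat.mul_comm j k] at this
      have heq2 : j * tH' + k * j = j * β := by
        rw [← hδH, ← hHu'eq, huH'j]
      have : k * j ≤ j * β := heq2 ▸ Nat.le_add_left _ _
      omega
    · have huG'j : uG' = j := by
        have := Nat.le_of_dvd hpos hjuG
        omega
      have hlt : j * α < k * j := by
        have : j * α < j * k := Nat.mul_lt_mul_of_le_of_lt (le_refl j) (by omega) hj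
        rwa [Nat.mul_comm j k] at this
      have heq2 : j * tG' + k * j = j * α := by
        rw [← hδG, ← hGu'eq, huG'j]
      have : k * j ≤ j * α := heq2 ▸ Nat.le_add_left _ _
      omega

omit hp in
lemma root_bound {f φ : Polynomial ℤ} {d : ℕ} (hd : 0 < d) (hφf : φ ∣ f)
    (hφ0 : φ.coeff 0 ≠ 0) (hdeg : 1 ≤ φ.natDegree)
    (hroots : ∀ θ : ℂ, Polynomial.aeval θ f = 0 → (d : ℝ) < ‖θ‖) :
    (d : ℝ) * |(φ.leadingCoeff : ℝ)| < |((φ.coeff 0 : ℤ) : ℝ)| := by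
  have hφne : φ ≠ 0 := fun hc => hφ0 (by simp [hc])
  set φC : Polynomial ℂ := φ.map (Int.castRingHom ℂ) with hφC
  have hinj : Function.Injective (Int.castRingHom ℂ) := fun a b hab => by
    have : ((a : ℤ) : ℂ) = ((b : ℤ) : ℂ) := hab
    exact_mod_cast this
  have hφCne : φC ≠ 0 := by
    rw [hφC, Ne, Polynomial.map_eq_zero_iff hinj]
    exact hφne
  have hdegC : φC.natDegree = φ.natDegree := Polynomial.natDegree_map_eq_of_injective hinj _
  have hsplits : φC.Splits := IsAlgClosed.splits φC
  have hcard : φC.roots.card = φ.natDegree := by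
    rw [← hdegC]
    exact (Polynomial.splits_iff_card_roots).mp hsplits
  have heq := hsplits.eq_prod_roots
  -- each root is large
  have hbig : ∀ z ∈ φC.roots, (d : ℝ) < ‖z‖ := by
    intro z hz
    have hz0 : φC.eval z = 0 := Polynomial.IsRoot.eq_zero ((Polynomial.mem_roots hφCne).mp hz)
    apply hroots
    obtain ⟨ψ, hψ⟩ := hφf
    rw [Polynomial.aeval_def, ← Polynomial.eval_map, hψ, Polynomial.map_mul]
    rw [show algebraMap ℤ ℂ = Int.castRingHom ℂ from rfl]
    rw [Polynomial.eval_mul, ← hφC, hz0, zero_mul]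
  -- compute |coeff 0|
  have heval : ‖φC.eval 0‖ =
      ‖φC.leadingCoeff‖ * ((φC.roots.map (fun z => ‖z‖)).prod) := by
    conv_lhs => rw [heq]
    rw [Polynomial.eval_mul, Polynomial.eval_C, norm_mul, Polynomial.eval_multiset_prod,
      Multiset.map_map, (show ‖(Multiset.map (eval 0 ∘ fun x => X - C x) φC.roots).prod‖ =
        ((Multiset.map (eval 0 ∘ fun x => X - C x) φC.roots).map (fun z => ‖z‖)).prod from
        map_multiset_prod (normHom : ℂ →*₀ ℝ) _), Multiset.map_map]
    congr 1
    apply congrArg Multiset.prod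
    apply Multiset.map_congr rfl
    intro z _
    simp
  -- the product of root moduli exceeds d
  have hd1 : (1 : ℝ) ≤ (d : ℝ) := by exact_mod_cast hd
  have hMne : φC.roots.map (fun z => ‖z‖) ≠ 0 := by
    intro hc
    have := congrArg Multiset.card hc
    rw [Multiset.card_map, hcard] at this
    simp at this
    omega
  have hprod : (d : ℝ) < ((φC.roots.map (fun z => ‖z‖)).prod) := by
    obtain ⟨x, hx⟩ := Multiset.exists_mem_of_ne_zero hMne
    obtain ⟨M', hM'⟩ := Multiset.exists_cons_of_mem hx
    have hMbig : ∀ y ∈ (φC.roots.map (fun z => ‖z‖)), (d : ℝ) < y := by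
      intro y hy
      obtain ⟨z, hz, rfl⟩ := Multiset.mem_map.mp hy
      exact hbig z hz
    have hM'1 : (1 : ℝ) ≤ M'.prod := by
      apply Multiset.one_le_prod
      intro y hy
      exact le_trans hd1 (le_of_lt (hMbig y (hM' ▸ Multiset.mem_cons_of_mem hy)))
    rw [hM', Multiset.prod_cons]
    have hx' : (d : ℝ) < x := hMbig x hx
    calc (d : ℝ) < x := hx'
    _ ≤ x * M'.prod := le_mul_of_one_le_right (le_trans (by norm_num) hx'.le) hM'1
  -- identify the complex quantities with integer ones
  have hlc : φC.leadingCoeff = ((φ.leadingCoeff : ℤ) : ℂ) := by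
    rw [Polynomial.leadingCoeff, hdegC, hφC, Polynomial.coeff_map]
    rfl
  have hev0 : φC.eval 0 = ((φ.coeff 0 : ℤ) : ℂ) := by
    rw [← Polynomial.coeff_zero_eq_eval_zero, hφC, Polynomial.coeff_map]
    rfl
  have hlcabs : ‖φC.leadingCoeff‖ = |(φ.leadingCoeff : ℝ)| := by
    rw [hlc, Complex.norm_intCast]
  have hevabs : ‖φC.eval 0‖ = |((φ.coeff 0 : ℤ) : ℝ)| := by
    rw [hev0, Complex.norm_intCast]
  have hlpos : (0 : ℝ) < |(φ.leadingCoeff : ℝ)| := by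
    rw [abs_pos]
    exact_mod_cast Polynomial.leadingCoeff_ne_zero.mpr hφne
  rw [hevabs, hlcabs] at heval
  rw [heval, mul_comm]
  exact mul_lt_mul_of_pos_left hprod hlpos

end Stmt2Aux


open Stmt2Aux in
theorem stmt2 (f : Polynomial ℤ) (d k p j q : ℕ) (hd : 0 < d) (hk : 0 < k)
    (hp : p.Prime) (hpd : ¬ (p : ℤ) ∣ (d : ℤ))
    (hprim : f.IsPrimitive)
    (hn : f.coeff f.natDegree = (p : ℤ) ^ k * d ∨
      f.coeff f.natDegree = -((p : ℤ) ^ k * d))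
    (hj1 : 1 ≤ j) (hjn : j ≤ f.natDegree)
    (hgcd : Nat.gcd k j = 1)
    (hdvd : ∀ i, f.natDegree - j + 1 ≤ i → i ≤ f.natDegree → (p : ℤ) ^ k ∣ f.coeff i)
    (hk1 : 1 < k → ¬ (p : ℤ) ∣ f.coeff (f.natDegree - j))
    (ha0 : 1 < (f.coeff 0).natAbs)
    (hq : q.Prime) (hqdvd : (q : ℤ) ∣ f.coeff 0)
    (hqmin : ∀ q' : ℕ, q'.Prime → (q' : ℤ) ∣ f.coeff 0 → q ≤ q')
    (hsize : |f.coeff 0 / (q : ℤ)| ≤ |f.coeff f.natDegree|)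
    (hroots : ∀ θ : ℂ, Polynomial.aeval θ f = 0 → (d : ℝ) < ‖θ‖) :
    Irreducible f := by
  haveI : Fact p.Prime := ⟨hp⟩
  have hpI : Prime (p : ℤ) := Int.prime_iff_natAbs_prime.mpr (by simpa using hp)
  have hd0 : (0 : ℤ) < (d : ℤ) := by exact_mod_cast hd
  have hp0 : (0 : ℤ) < (p : ℤ) := by exact_mod_cast hp.pos
  have hpk0 : (0 : ℤ) < (p : ℤ) ^ k := pow_pos hp0 k
  have hpkd : (0 : ℤ) < (p : ℤ) ^ k * (d : ℤ) := mul_pos hpk0 hd0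
  have hlead : f.coeff f.natDegree ≠ 0 := by
    rcases hn with h | h <;> rw [h]
    · exact hpkd.ne'
    · simpa using hpkd.ne'
  have hfne : f ≠ 0 := fun hc => hlead (by rw [hc]; simp)
  have ha0ne : f.coeff 0 ≠ 0 := fun hc => by rw [hc] at ha0; simp at ha0
  have habs : |f.coeff f.natDegree| = (p : ℤ) ^ k * d := by
    rcases hn with h | h <;> rw [h]
    · exact abs_of_pos hpkd
    · rw [abs_neg]
      exact abs_of_pos hpkd
  constructor
  · intro hu
    have h0 : f.natDegree = 0 := Polynomial.natDegree_eq_zero_of_isUnit hu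
    omega
  intro g h hf
  by_contra hcon
  push_neg at hcon
  obtain ⟨hgu, hhu⟩ := hcon
  have hdeg : ∀ a b : Polynomial ℤ, f = a * b → ¬IsUnit a → 1 ≤ a.natDegree := by
    intro a b hab hau
    by_contra hd0'
    push_neg at hd0'
    obtain ⟨c, rfl⟩ := Polynomial.natDegree_eq_zero.mp (show a.natDegree = 0 by omega)
    exact hau (Polynomial.isUnit_C.mpr (hprim c ⟨b, hab⟩))
  have hgd := hdeg g h hf hgu
  have hhd := hdeg h g (by rwa [mul_comm]) hhu
  have hgne : g ≠ 0 := fun hc => hfne (by rw [hf, hc, zero_mul])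
  have hhne : h ≠ 0 := fun hc => hfne (by rw [hf, hc, mul_zero])
  have hcoeff0 : g.coeff 0 * h.coeff 0 = f.coeff 0 := by
    rw [hf, Polynomial.mul_coeff_zero]
  have hg0 : g.coeff 0 ≠ 0 := fun hc => ha0ne (by rw [← hcoeff0, hc, zero_mul])
  have hh0 : h.coeff 0 ≠ 0 := fun hc => ha0ne (by rw [← hcoeff0, hc, mul_zero])
  have hnd : g.natDegree + h.natDegree = f.natDegree := by
    rw [hf, Polynomial.natDegree_mul hgne hhne]
  have hlgh : g.leadingCoeff * h.leadingCoeff = f.coeff f.natDegree := by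
    rw [hf]
    exact (Polynomial.leadingCoeff_mul g h).symm
  have hglne : g.leadingCoeff ≠ 0 := Polynomial.leadingCoeff_ne_zero.mpr hgne
  have hhlne : h.leadingCoeff ≠ 0 := Polynomial.leadingCoeff_ne_zero.mpr hhne
  -- dichotomy : p cannot divide both leading coefficients
  have hdich : ¬((p : ℤ) ∣ g.leadingCoeff ∧ (p : ℤ) ∣ h.leadingCoeff) := by
    rintro ⟨hdg, hdh⟩
    rcases Nat.lt_or_ge k 2 with hk2 | hk2
    · -- k = 1
      have hk1' : k = 1 := by omega
      have hsq : (p : ℤ) * (p : ℤ) ∣ f.coeff f.natDegree := by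
        rw [← hlgh]
        exact mul_dvd_mul hdg hdh
      have hpd' : (p : ℤ) ∣ (d : ℤ) := by
        rcases hn with hcase | hcase
        · rw [hcase, hk1', pow_one] at hsq
          exact (mul_dvd_mul_iff_left hpI.ne_zero).mp hsq
        · rw [hcase, hk1', pow_one, dvd_neg] at hsq
          exact (mul_dvd_mul_iff_left hpI.ne_zero).mp hsq
      exact hpd hpd'
    · -- k ≥ 2 : use the Newton polygon argument on the reversed polynomials
      have hrev : g.reverse * h.reverse = f.reverse := by
        rw [hf, Polynomial.reverse_mul_of_domain]
      apply key (p := p) (k := k) (j := j) (by omega) hgcd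
        (G := g.reverse) (H := h.reverse)
        (by rw [Polynomial.coeff_zero_reverse]; exact hglne)
        (by rw [Polynomial.coeff_zero_reverse]; exact hhlne)
        (by rw [Polynomial.coeff_zero_reverse]; exact hdg)
        (by rw [Polynomial.coeff_zero_reverse]; exact hdh)
      · rw [hrev, Polynomial.coeff_zero_reverse]
        exact hdvd f.natDegree (by omega) le_rfl
      · rw [hrev, Polynomial.coeff_zero_reverse]
        intro hc
        apply hpd
        have : (p : ℤ) ^ (k + 1) ∣ (p : ℤ) ^ k * (d : ℤ) := by
          rcases hn with hcase | hcase
          · rwa [Polynomial.leadingCoeff, hcase] at hc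
          · rw [Polynomial.leadingCoeff, hcase, dvd_neg] at hc
            exact hc
        rw [pow_succ] at this
        exact (mul_dvd_mul_iff_left hpk0.ne').mp this
      · intro i hi1 hij
        rw [hrev, Polynomial.coeff_reverse, Polynomial.revAt_le (by omega)]
        exact hdvd (f.natDegree - i) (by omega) (by omega)
      · rw [hrev, Polynomial.coeff_reverse, Polynomial.revAt_le hjn]
        exact hk1 (by omega)
  -- hence p^k divides one of the leading coefficients
  have hor : (p : ℤ) ^ k ∣ h.leadingCoeff ∨ (p : ℤ) ^ k ∣ g.leadingCoeff := by
    have hdvdlead : (p : ℤ) ^ k ∣ g.leadingCoeff * h.leadingCoeff := by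
      rw [hlgh]
      rcases hn with hcase | hcase <;> rw [hcase]
      · exact Dvd.intro _ rfl
      · exact (Dvd.intro _ rfl).neg_right
    rcases not_and_or.mp hdich with hng | hnh
    · left
      have hcop : IsCoprime ((p : ℤ) ^ k) g.leadingCoeff :=
        (hpI.coprime_iff_not_dvd.mpr hng).pow_left
      exact hcop.dvd_of_dvd_mul_left hdvdlead
    · right
      have hcop : IsCoprime ((p : ℤ) ^ k) h.leadingCoeff :=
        (hpI.coprime_iff_not_dvd.mpr hnh).pow_left
      exact hcop.dvd_of_dvd_mul_right hdvdlead
  -- final size argument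
  have hfinal : ∀ a b : Polynomial ℤ, f = a * b → 1 ≤ a.natDegree → 1 ≤ b.natDegree →
      (p : ℤ) ^ k ∣ b.leadingCoeff → False := by
    intro a b hab had hbd hpkb
    have hc0 : a.coeff 0 * b.coeff 0 = f.coeff 0 := by
      rw [hab, Polynomial.mul_coeff_zero]
    have ha0' : a.coeff 0 ≠ 0 := fun hc => ha0ne (by rw [← hc0, hc, zero_mul])
    have hb0' : b.coeff 0 ≠ 0 := fun hc => ha0ne (by rw [← hc0, hc, mul_zero])
    have hAa := root_bound hd ⟨b, hab⟩ ha0' had hroots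
    have hAb := root_bound hd ⟨a, by rw [hab, mul_comm]⟩ hb0' hbd hroots
    -- q ≤ |a₀|
    have halpos : (1 : ℝ) ≤ |((a.leadingCoeff : ℤ) : ℝ)| := by
      have : a.leadingCoeff ≠ 0 := Polynomial.leadingCoeff_ne_zero.mpr
        (fun hc => ha0' (by rw [hc]; simp))
      have h1 : (1 : ℤ) ≤ |a.leadingCoeff| := Int.one_le_abs this
      calc (1:ℝ) ≤ ((|a.leadingCoeff| : ℤ) : ℝ) := by exact_mod_cast h1
      _ = |((a.leadingCoeff : ℤ) : ℝ)| := by push_cast; rfl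
    have h2a : 1 < |a.coeff 0| := by
      have hd1 : (1 : ℝ) ≤ (d : ℝ) := by exact_mod_cast hd
      have : (1 : ℝ) < |((a.coeff 0 : ℤ) : ℝ)| := by
        calc (1:ℝ) ≤ (d : ℝ) * |((a.leadingCoeff : ℤ) : ℝ)| := by
              nlinarith
        _ < _ := hAa
      have h3 : (1 : ℝ) < ((|a.coeff 0| : ℤ) : ℝ) := by
        rwa [show ((|a.coeff 0| : ℤ) : ℝ) = |((a.coeff 0 : ℤ) : ℝ)| by push_cast; rfl]
      exact_mod_cast h3
    have hqa : (q : ℤ) ≤ |a.coeff 0| := by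
      have hna : (a.coeff 0).natAbs ≠ 1 := by
        intro hc
        have := Int.natAbs_eq_iff.mp hc
        rcases this with h' | h' <;> rw [h'] at h2a <;> simp at h2a
      obtain ⟨r, hr, hrd⟩ := Nat.exists_prime_and_dvd hna
      have hrdvd : (r : ℤ) ∣ a.coeff 0 :=
        Int.dvd_natAbs.mp (Int.natCast_dvd_natCast.mpr hrd)
      have hrf : (r : ℤ) ∣ f.coeff 0 := dvd_trans hrdvd ⟨b.coeff 0, hc0.symm⟩
      have hqr : q ≤ r := hqmin r hr hrf
      have hrabs : (r : ℤ) ≤ |a.coeff 0| := by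
        rw [Int.abs_eq_natAbs]
        exact_mod_cast Nat.le_of_dvd (by omega) hrd
      have hqr' : (q : ℤ) ≤ (r : ℤ) := by exact_mod_cast hqr
      exact le_trans hqr' hrabs
    -- |b₀| ≤ |aₙ|
    have hq0 : (0 : ℤ) < (q : ℤ) := by exact_mod_cast hq.pos
    have hstep1 : (q : ℤ) * |b.coeff 0| ≤ |f.coeff 0| := by
      rw [← hc0, abs_mul]
      exact mul_le_mul_of_nonneg_right hqa (abs_nonneg _)
    have hstep2 : |f.coeff 0| = (q : ℤ) * |f.coeff 0 / (q : ℤ)| := by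
      obtain ⟨c, hc⟩ := hqdvd
      rw [hc, Int.mul_ediv_cancel_left _ hq0.ne', abs_mul, abs_of_pos hq0]
    have hb0an : |b.coeff 0| ≤ |f.coeff f.natDegree| := by
      have : (q : ℤ) * |b.coeff 0| ≤ (q : ℤ) * |f.coeff f.natDegree| := by
        calc (q : ℤ) * |b.coeff 0| ≤ |f.coeff 0| := hstep1
        _ = (q : ℤ) * |f.coeff 0 / (q : ℤ)| := hstep2
        _ ≤ (q : ℤ) * |f.coeff f.natDegree| := by
              exact mul_le_mul_of_nonneg_left hsize (by omega)
      exact le_of_mul_le_mul_left this hq0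
    -- p^k ≤ |lead b| , so |aₙ| ≤ d * |lead b| < |b₀| ≤ |aₙ|
    have hblne : b.leadingCoeff ≠ 0 := Polynomial.leadingCoeff_ne_zero.mpr
      (fun hc => hb0' (by rw [hc]; simp))
    have hpkle : (p : ℤ) ^ k ≤ |b.leadingCoeff| := Int.le_of_dvd (abs_pos.mpr hblne)
      ((dvd_abs _ _).mpr hpkb)
    have hZ : |f.coeff f.natDegree| ≤ (d : ℤ) * |b.leadingCoeff| := by
      rw [habs, mul_comm ((p : ℤ) ^ k) (d : ℤ)]
      exact mul_le_mul_of_nonneg_left hpkle hd0.le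
    have hR : ((|b.coeff 0| : ℤ) : ℝ) < ((|b.coeff 0| : ℤ) : ℝ) := by
      calc ((|b.coeff 0| : ℤ) : ℝ) ≤ ((|f.coeff f.natDegree| : ℤ) : ℝ) := by exact_mod_cast hb0an
      _ ≤ ((d : ℤ) : ℝ) * ((|b.leadingCoeff| : ℤ) : ℝ) := by exact_mod_cast hZ
      _ = (d : ℝ) * |((b.leadingCoeff : ℤ) : ℝ)| := by push_cast; rfl
      _ < |((b.coeff 0 : ℤ) : ℝ)| := hAb
      _ = ((|b.coeff 0| : ℤ) : ℝ) := by push_cast; rfl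
    exact lt_irrefl _ hR
  rcases hor with h' | h'
  · exact hfinal g h hf hgd hhd h'
  · exact hfinal h g (by rwa [mul_comm]) hhd hgd h'
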